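/- Let K be an upward directed countable poset written as a disjoint union K = E_1 ∪ ... ∪ E_n of countable sets, with bijections φ_i : E_i → K. Then the operators T_{φ_i} = ⊕_{x ∈ E_i} T_{[x, φ_i(x)]} on ℓ²(S) satisfy the Cuntz relations: T_{φ_i}^* T_{φ_i} = id, T_{φ_i}^* T_{φ_j} = 0 for i ≠ j, and Σ_{i=1}^n T_{φ_i} T_{φ_i}^* = id. -/

import Mathlib

/-- The path semigroup `S` on a poset `K`, presented by generators and relations.
`down a b h` is the elementary path `(a,b)` (with `a ≤ b`) from `b` down to `a`;
`up a b h` is the elementary path `\overline{(a,b)}` (with `b ≤ a`) from `b` up to `a`;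
`idem a` is the trivial path `i_a`; `zero` is the empty path `0`;
`src` is the starting point `∂₁` and `tgt` the ending point `∂₀` (both `none` only on `0`). -/
structure PathSemigroup (K : Type*) [PartialOrder K] where
  S : Type*
  mul : S → S → S
  zero : S
  idem : K → S
  down : (a b : K) → a ≤ b → S
  up : (a b : K) → b ≤ a → S
  src : S → Option K
  tgt : S → Option K
  inv : S → S
  mul_assoc : ∀ p q r : S, mul (mul p q) r = mul p (mul q r)
  zero_mul : ∀ p : S, mul zero p = zero
  mul_zero : ∀ p : S, mul p zero = zero
  src_eq_none : ∀ p : S, src p = none ↔ p = zero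
  tgt_eq_none : ∀ p : S, tgt p = none ↔ p = zero
  src_idem : ∀ a : K, src (idem a) = some a
  tgt_idem : ∀ a : K, tgt (idem a) = some a
  src_down : ∀ (a b : K) (h : a ≤ b), src (down a b h) = some b
  tgt_down : ∀ (a b : K) (h : a ≤ b), tgt (down a b h) = some a
  src_up : ∀ (a b : K) (h : b ≤ a), src (up a b h) = some b
  tgt_up : ∀ (a b : K) (h : b ≤ a), tgt (up a b h) = some a
  mul_eq_zero_iff : ∀ p q : S, mul p q = zero ↔ (p = zero ∨ q = zero ∨ src p ≠ tgt q)
  src_mul : ∀ p q : S, mul p q ≠ zero → src (mul p q) = src q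
  tgt_mul : ∀ p q : S, mul p q ≠ zero → tgt (mul p q) = tgt p
  inv_zero : inv zero = zero
  inv_idem : ∀ a : K, inv (idem a) = idem a
  inv_down : ∀ (a b : K) (h : a ≤ b), inv (down a b h) = up b a h
  inv_up : ∀ (a b : K) (h : b ≤ a), inv (up a b h) = down b a h
  inv_inv : ∀ p : S, inv (inv p) = p
  src_inv : ∀ p : S, src (inv p) = tgt p
  tgt_inv : ∀ p : S, tgt (inv p) = src p
  inv_mul : ∀ p q : S, inv (mul p q) = mul (inv q) (inv p)
  down_mul_down : ∀ (a b c : K) (hab : a ≤ b) (hbc : b ≤ c),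
    mul (down a b hab) (down b c hbc) = down a c (le_trans hab hbc)
  up_mul_up : ∀ (a b c : K) (hab : a ≤ b) (hbc : b ≤ c),
    mul (up c b hbc) (up b a hab) = up c a (le_trans hab hbc)
  up_mul_down : ∀ (a b : K) (h : a ≤ b), mul (up b a h) (down a b h) = idem b
  down_mul_up : ∀ (a b : K) (h : a ≤ b), mul (down a b h) (up b a h) = idem a
  down_mul_idem : ∀ (a b : K) (h : a ≤ b), mul (down a b h) (idem b) = down a b h
  idem_mul_down : ∀ (a b : K) (h : a ≤ b), mul (idem a) (down a b h) = down a b h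
  up_mul_idem : ∀ (a b : K) (h : b ≤ a), mul (up a b h) (idem b) = up a b h
  idem_mul_up : ∀ (a b : K) (h : b ≤ a), mul (idem a) (up a b h) = up a b h
  idem_mul_idem : ∀ a : K, mul (idem a) (idem a) = idem a
  generated : ∀ p : S, p ≠ zero → ∀ P : S → Prop,
    (∀ a : K, P (idem a)) →
    (∀ (a b : K) (h : a ≤ b), P (down a b h)) →
    (∀ (a b : K) (h : b ≤ a), P (up a b h)) →
    (∀ x y : S, P x → P y → mul x y ≠ zero → P (mul x y)) →
    P p

namespace PathSemigroup

variable {K : Type*} [PartialOrder K]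

/-- The 1-simplex `[a^x c] = (a,x) * \overline{(x,c)}` with support `x`. -/
def simplex (P : PathSemigroup K) (a x c : K) (h1 : a ≤ x) (h2 : c ≤ x) : P.S :=
  P.mul (P.down a x h1) (P.up x c h2)

/-- The set `G_a` of loops that start and end at `a`. -/
def Loop (P : PathSemigroup K) (a : K) : Set P.S :=
  {p | p ≠ P.zero ∧ P.tgt p = some a ∧ P.src p = some a}

end PathSemigroup

namespace PathSemigroup
variable {K : Type*} [PartialOrder K]

/-- The Hilbert space `ℓ²(S)` with orthonormal basis indexed by the nonzero paths. -/
abbrev H (P : PathSemigroup K) : Type _ := lp (fun _ : {p : P.S // p ≠ P.zero} => ℂ) 2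

open Classical

/-- The basis vector `e_p` of `ℓ²(S)` for a path `p` (interpreted as `0` for the empty path). -/
noncomputable def e (P : PathSemigroup K) (p : P.S) : P.H :=
  if h : p ≠ P.zero then lp.single 2 (⟨p, h⟩ : {p : P.S // p ≠ P.zero}) (1 : ℂ) else 0

end PathSemigroup


namespace PathSemigroup
variable {K : Type*} [PartialOrder K]

lemma zero_src (P : PathSemigroup K) : P.src P.zero = none := (P.src_eq_none P.zero).mpr rfl

lemma down_ne_zero (P : PathSemigroup K) (a b : K) (h : a ≤ b) : P.down a b h ≠ P.zero := by
  intro h0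
  have h1 := P.src_down a b h
  rw [h0, P.zero_src] at h1
  cases h1

lemma up_ne_zero (P : PathSemigroup K) (a b : K) (h : b ≤ a) : P.up a b h ≠ P.zero := by
  intro h0
  have h1 := P.src_up a b h
  rw [h0, P.zero_src] at h1
  cases h1

lemma idem_mul' (P : PathSemigroup K) (q : P.S) (hq : q ≠ P.zero) (a : K)
    (ha : P.tgt q = some a) : P.mul (P.idem a) q = q := by
  have H := P.generated q hq (fun p => ∀ b : K, P.tgt p = some b → P.mul (P.idem b) p = p)
    (fun a' b hb => by
      rw [P.tgt_idem] at hb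
      obtain rfl : a' = b := Option.some.inj hb
      exact P.idem_mul_idem a')
    (fun a' b' h b hb => by
      rw [P.tgt_down] at hb
      obtain rfl : a' = b := Option.some.inj hb
      exact P.idem_mul_down a' b' h)
    (fun a' b' h b hb => by
      rw [P.tgt_up] at hb
      obtain rfl : a' = b := Option.some.inj hb
      exact P.idem_mul_up a' b' h)
    (fun x y hx hy hne b hb => by
      rw [P.tgt_mul x y hne] at hb
      rw [← P.mul_assoc, hx b hb])
  exact H a ha

lemma simplex_ne_zero (P : PathSemigroup K) (x c a : K) (h1 : x ≤ c) (h2 : a ≤ c) :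
    P.simplex x c a h1 h2 ≠ P.zero := by
  rw [simplex, Ne, P.mul_eq_zero_iff]
  push_neg
  exact ⟨P.down_ne_zero _ _ _, P.up_ne_zero _ _ _, by rw [P.src_down, P.tgt_up]⟩

lemma tgt_simplex (P : PathSemigroup K) (x c a : K) (h1 : x ≤ c) (h2 : a ≤ c) :
    P.tgt (P.simplex x c a h1 h2) = some x := by
  rw [simplex, P.tgt_mul _ _ (P.simplex_ne_zero x c a h1 h2), P.tgt_down]

lemma src_simplex (P : PathSemigroup K) (x c a : K) (h1 : x ≤ c) (h2 : a ≤ c) :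
    P.src (P.simplex x c a h1 h2) = some a := by
  rw [simplex, P.src_mul _ _ (P.simplex_ne_zero x c a h1 h2), P.src_up]

lemma simplex_mul_ne_zero (P : PathSemigroup K) (x c a : K) (h1 : x ≤ c) (h2 : a ≤ c)
    (q : P.S) (hq : q ≠ P.zero) (ha : P.tgt q = some a) :
    P.mul (P.simplex x c a h1 h2) q ≠ P.zero := by
  rw [Ne, P.mul_eq_zero_iff]
  push_neg
  exact ⟨P.simplex_ne_zero x c a h1 h2, hq, by rw [P.src_simplex, ha]⟩

lemma tgt_simplex_mul (P : PathSemigroup K) (x c a : K) (h1 : x ≤ c) (h2 : a ≤ c)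
    (q : P.S) (hq : q ≠ P.zero) (ha : P.tgt q = some a) :
    P.tgt (P.mul (P.simplex x c a h1 h2) q) = some x := by
  rw [P.tgt_mul _ _ (P.simplex_mul_ne_zero x c a h1 h2 q hq ha), P.tgt_simplex]

lemma simplex_cancel (P : PathSemigroup K) (a x c : K) (h1 : x ≤ c) (h2 : a ≤ c)
    (q : P.S) (hq : q ≠ P.zero) (ha : P.tgt q = some a) :
    P.mul (P.simplex a c x h2 h1) (P.mul (P.simplex x c a h1 h2) q) = q := by
  have hr : P.mul (P.up c a h2) q ≠ P.zero := by
    rw [Ne, P.mul_eq_zero_iff]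
    push_neg
    exact ⟨P.up_ne_zero _ _ _, hq, by rw [P.src_up, ha]⟩
  have htr : P.tgt (P.mul (P.up c a h2) q) = some c := by
    rw [P.tgt_mul _ _ hr, P.tgt_up]
  simp only [simplex]
  rw [P.mul_assoc (P.down x c h1) (P.up c a h2) q,
    P.mul_assoc (P.down a c h2) (P.up c x h1),
    ← P.mul_assoc (P.up c x h1) (P.down x c h1), P.up_mul_down,
    P.idem_mul' _ hr c htr, ← P.mul_assoc, P.down_mul_up, P.idem_mul' q hq a ha]

open Classical in
lemma e_eq_single (P : PathSemigroup K) (p : P.S) (hp : p ≠ P.zero) :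
    P.e p = lp.single 2 (⟨p, hp⟩ : {p : P.S // p ≠ P.zero}) (1 : ℂ) := dif_pos hp

lemma tgt_exists (P : PathSemigroup K) (p : P.S) (hp : p ≠ P.zero) :
    ∃ a : K, P.tgt p = some a := by
  cases h : P.tgt p with
  | none => exact absurd ((P.tgt_eq_none p).mp h) hp
  | some a => exact ⟨a, rfl⟩

end PathSemigroup

open Classical in
lemma clm_ext_single {α : Type*} {A B : lp (fun _ : α => ℂ) 2 →L[ℂ] lp (fun _ : α => ℂ) 2}
    (h : ∀ i, A (lp.single 2 i 1) = B (lp.single 2 i 1)) : A = B := by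
  refine ContinuousLinearMap.ext fun f => ?_
  have hf : HasSum (fun i : α => lp.single 2 i (f i)) f :=
    lp.hasSum_single (by norm_num) f
  have hA : HasSum (fun i => A (lp.single 2 i (f i))) (A f) := A.hasSum hf
  have hB : HasSum (fun i => B (lp.single 2 i (f i))) (B f) := B.hasSum hf
  have heq : (fun i => A (lp.single 2 i (f i))) = fun i => B (lp.single 2 i (f i)) := by
    funext i
    have hs : lp.single 2 i (f i) = f i • (lp.single 2 i (1 : ℂ) : lp (fun _ : α => ℂ) 2) := by
      rw [← lp.single_smul, smul_eq_mul, mul_one]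
    rw [hs, map_smul, map_smul, h i]
  rw [heq] at hA
  exact hA.unique hB

open Classical in
lemma clm_ext_e {K : Type*} [PartialOrder K] (P : PathSemigroup K)
    {A B : P.H →L[ℂ] P.H}
    (h : ∀ (p : P.S), p ≠ P.zero → A (P.e p) = B (P.e p)) : A = B := by
  apply clm_ext_single
  rintro ⟨p, hp⟩
  have h2 := h p hp
  rw [P.e_eq_single p hp] at h2
  convert h2 using 3

/-- final theorem -/
theorem statement19 {K : Type*} [PartialOrder K] [Countable K]
    (hdir : ∀ a b : K, ∃ c, a ≤ c ∧ b ≤ c)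
    (P : PathSemigroup K)
    (n : ℕ) (E : Fin n → Set K)
    (hdisj : ∀ i j, i ≠ j → Disjoint (E i) (E j))
    (hcover : (⋃ i, E i) = Set.univ)
    (φ : (i : Fin n) → (E i ≃ K))
    (U : Fin n → (P.H →L[ℂ] P.H))
    (hU : ∀ (i : Fin n) (q : P.S), q ≠ P.zero → ∀ a : K, P.tgt q = some a →
      ∀ (x : K) (hx : x ∈ E i), φ i ⟨x, hx⟩ = a →
        ∀ (c : K) (h1 : x ≤ c) (h2 : a ≤ c),
          U i (P.e q) = P.e (P.mul (P.simplex x c a h1 h2) q))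
    (hUadj : ∀ (i : Fin n) (q : P.S), q ≠ P.zero → ∀ a : K, P.tgt q = some a →
      ∀ (ha : a ∈ E i) (c : K) (h1 : φ i ⟨a, ha⟩ ≤ c) (h2 : a ≤ c),
        ContinuousLinearMap.adjoint (U i) (P.e q) =
          P.e (P.mul (P.simplex (φ i ⟨a, ha⟩) c a h1 h2) q))
    (hUadj0 : ∀ (i : Fin n) (q : P.S), q ≠ P.zero → ∀ a : K, P.tgt q = some a →
      a ∉ E i → ContinuousLinearMap.adjoint (U i) (P.e q) = 0) :
    (∀ i, ContinuousLinearMap.adjoint (U i) ∘L U i = ContinuousLinearMap.id ℂ P.H) ∧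
    (∀ i j, i ≠ j → ContinuousLinearMap.adjoint (U i) ∘L U j = 0) ∧
    (∑ i, U i ∘L ContinuousLinearMap.adjoint (U i)) = ContinuousLinearMap.id ℂ P.H := by
  classical
  refine ⟨?_, ?_, ?_⟩
  · -- T_i* T_i = id
    intro i
    apply clm_ext_e
    intro q hq
    rw [ContinuousLinearMap.comp_apply, ContinuousLinearMap.id_apply]
    obtain ⟨a, ha⟩ := P.tgt_exists q hq
    obtain ⟨x, hxmem, hφ⟩ : ∃ x, ∃ hx : x ∈ E i, φ i ⟨x, hx⟩ = a :=
      ⟨((φ i).symm a : K), ((φ i).symm a).2, by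
        rw [Subtype.coe_eta]; exact (φ i).apply_symm_apply a⟩
    have ha' : P.tgt q = some (φ i ⟨x, hxmem⟩) := by rw [hφ]; exact ha
    obtain ⟨c, hc1, hc2⟩ := hdir x (φ i ⟨x, hxmem⟩)
    rw [hU i q hq _ ha' x hxmem rfl c hc1 hc2]
    set p := P.mul (P.simplex x c (φ i ⟨x, hxmem⟩) hc1 hc2) q with hpdef
    have hp : p ≠ P.zero := P.simplex_mul_ne_zero _ _ _ _ _ q hq ha'
    have htp : P.tgt p = some x := P.tgt_simplex_mul _ _ _ _ _ q hq ha'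
    rw [hUadj i p hp x htp hxmem c hc2 hc1, hpdef,
      P.simplex_cancel _ _ _ hc1 hc2 q hq ha']
  · -- T_i* T_j = 0 for i ≠ j
    intro i j hij
    apply clm_ext_e
    intro q hq
    rw [ContinuousLinearMap.comp_apply, ContinuousLinearMap.zero_apply]
    obtain ⟨a, ha⟩ := P.tgt_exists q hq
    obtain ⟨x, hxmem, hφ⟩ : ∃ x, ∃ hx : x ∈ E j, φ j ⟨x, hx⟩ = a :=
      ⟨((φ j).symm a : K), ((φ j).symm a).2, by
        rw [Subtype.coe_eta]; exact (φ j).apply_symm_apply a⟩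
    have ha' : P.tgt q = some (φ j ⟨x, hxmem⟩) := by rw [hφ]; exact ha
    obtain ⟨c, hc1, hc2⟩ := hdir x (φ j ⟨x, hxmem⟩)
    rw [hU j q hq _ ha' x hxmem rfl c hc1 hc2]
    set p := P.mul (P.simplex x c (φ j ⟨x, hxmem⟩) hc1 hc2) q with hpdef
    have hp : p ≠ P.zero := P.simplex_mul_ne_zero _ _ _ _ _ q hq ha'
    have htp : P.tgt p = some x := P.tgt_simplex_mul _ _ _ _ _ q hq ha'
    have hnot : x ∉ E i := fun hmem =>
      Set.disjoint_left.mp (hdisj i j hij) hmem hxmem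
    exact hUadj0 i p hp x htp hnot
  · -- Σ T_i T_i* = id
    apply clm_ext_e
    intro q hq
    rw [ContinuousLinearMap.sum_apply, ContinuousLinearMap.id_apply]
    obtain ⟨a, ha⟩ := P.tgt_exists q hq
    have hamem : a ∈ ⋃ i, E i := hcover ▸ Set.mem_univ a
    obtain ⟨i₀, ha₀⟩ := Set.mem_iUnion.mp hamem
    obtain ⟨c, hc1, hc2⟩ := hdir (φ i₀ ⟨a, ha₀⟩) a
    rw [Finset.sum_eq_single i₀ ?h₀ (fun h => absurd (Finset.mem_univ i₀) h)]
    · rw [ContinuousLinearMap.comp_apply,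
        hUadj i₀ q hq a ha ha₀ c hc1 hc2]
      set p := P.mul (P.simplex (φ i₀ ⟨a, ha₀⟩) c a hc1 hc2) q with hpdef
      have hp : p ≠ P.zero := P.simplex_mul_ne_zero _ _ _ _ _ q hq ha
      have htp : P.tgt p = some (φ i₀ ⟨a, ha₀⟩) := P.tgt_simplex_mul _ _ _ _ _ q hq ha
      rw [hU i₀ p hp _ htp a ha₀ rfl c hc2 hc1, hpdef,
        P.simplex_cancel _ _ _ hc1 hc2 q hq ha]
    case h₀ =>
      intro i _ hne
      have hnot : a ∉ E i := fun hmem =>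
        Set.disjoint_left.mp (hdisj i i₀ hne) hmem ha₀
      rw [ContinuousLinearMap.comp_apply, hUadj0 i q hq a ha hnot, map_zero]
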